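/- Let K act orthogonally on V with polar section 𝔞 and Weyl group W (so (K·v) ∩ 𝔞 = W·v for v ∈ 𝔞), and suppose the restriction map ℝ[V]^K → ℝ[𝔞]^W is an isomorphism. If S ⊆ 𝔞 is a W-invariant rigidly convex set with defining polynomial p, and p̃ ∈ ℝ[V]^K is the unique K-invariant extension of p, then for every v ∈ V the univariate polynomial t ↦ p̃(tv) has only real zeros, provided p is real zero with respect to 0 ∈ 𝔞. -/
import Mathlib


open Matrix MvPolynomial

/-- The univariate polynomial `t ↦ p(u + t w)`. -/
noncomputable def lineRestrict {n : ℕ} (p : MvPolynomial (Fin n) ℝ) (u w : Fin n → ℝ) :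
    Polynomial ℝ :=
  MvPolynomial.aeval (fun i => Polynomial.C (u i) + Polynomial.X * Polynomial.C (w i)) p

/-- A univariate real polynomial has only real roots: every complex root is real. -/
def OnlyRealRoots (q : Polynomial ℝ) : Prop :=
  ∀ z : ℂ, Polynomial.aeval z q = 0 → z.im = 0

lemma lineRestrict_eval {n : ℕ} (p : MvPolynomial (Fin n) ℝ) (u w : Fin n → ℝ) (t : ℝ) :
    Polynomial.eval t (lineRestrict p u w) = eval (fun i => u i + t * w i) p := by
  unfold lineRestrict
  rw [MvPolynomial.aeval_def, show (Polynomial.eval t : Polynomial ℝ → ℝ) =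
    (Polynomial.evalRingHom t : Polynomial ℝ →+* ℝ) from rfl,
    MvPolynomial.eval₂_comp_left (Polynomial.evalRingHom t)]
  simp only [MvPolynomial.eval, Function.comp]
  congr 1
  · ext r; simp
  · funext i
    simp
    exact mul_comm (w i) t

/-- Let `K` act orthogonally on `ℝᴺ` with polar section `𝔞` meeting every
orbit, and let `p̃` be a `K`-invariant polynomial whose restriction `p` to `𝔞` is real zero
with respect to `0 ∈ 𝔞` (i.e. `p̃(0) > 0` and for every nonzero `w ∈ 𝔞` the polynomial
`t ↦ p̃(tw)` has only real roots).  Then for every `v ∈ ℝᴺ` the univariate polynomial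
`t ↦ p̃(tv)` has only real zeros. -/
theorem invariant_extension_real_rooted (N : ℕ)
    (K : Type) [Group K] (ρ : K →* ((Fin N → ℝ) ≃ₗ[ℝ] (Fin N → ℝ)))
    (horth : ∀ (g : K) (x y : Fin N → ℝ), (ρ g x) ⬝ᵥ (ρ g y) = x ⬝ᵥ y)
    (𝔞 : Submodule ℝ (Fin N → ℝ))
    (hsec : ∀ x : Fin N → ℝ, ∃ g : K, ρ g x ∈ 𝔞)
    (ptilde : MvPolynomial (Fin N) ℝ)
    (hinv : ∀ (g : K) (x : Fin N → ℝ), eval (ρ g x) ptilde = eval x ptilde)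
    (hpos : 0 < eval (0 : Fin N → ℝ) ptilde)
    (hRZ : ∀ w ∈ 𝔞, w ≠ 0 → OnlyRealRoots (lineRestrict ptilde 0 w)) :
    ∀ v : Fin N → ℝ, OnlyRealRoots (lineRestrict ptilde 0 v) := by
  intro v
  by_cases hv : v = 0
  · -- constant polynomial, value eval 0 ptilde ≠ 0, no roots
    have hconst : lineRestrict ptilde 0 v = Polynomial.C (eval (0 : Fin N → ℝ) ptilde) := by
      apply Polynomial.funext
      intro t
      rw [lineRestrict_eval]
      simp [hv]
    intro z hz
    rw [hconst] at hz
    simp at hz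
    exact absurd hz (by simpa [MvPolynomial.eval] using (ne_of_gt hpos))
  · obtain ⟨g, hg⟩ := hsec v
    have hgv : ρ g v ≠ 0 := by
      intro h
      apply hv
      have := (ρ g).injective
      apply this
      simpa using h
    have heq : lineRestrict ptilde 0 v = lineRestrict ptilde 0 (ρ g v) := by
      apply Polynomial.funext
      intro t
      rw [lineRestrict_eval, lineRestrict_eval]
      simp only [Pi.zero_apply]
      have h1 : (fun i => (0:ℝ) + t * (ρ g) v i) = ρ g (t • v) := by
        funext i
        rw [_root_.map_smul]
        simp
      rw [h1, hinv]
      have h2 : (fun i => (0:ℝ) + t * v i) = t • v := by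
        funext i; simp
      rw [h2]
    rw [heq]
    exact hRZ _ hg hgv
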